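/- Let H̃>0, κ>0, and let Φ be the set of all φ∈C^{2,1}([0,1]^d,ℝ) with ‖φ‖_{C^{2,1}([0,1]^d,ℝ)} ≤ H̃. Let (U_j)_{j≥1} and (U'_j)_{j≥1} be independent i.i.d. random variables uniformly distributed on [0,1]^d, and let m:ℕ→ℕ be increasing with m(n)→∞. Define the empirical penalty P̂_n^{(κ)}(φ) = (1/m(n)) Σ_{j=1}^{m(n)} max(0, φ((U_j+U'_j)/2) − (φ(U_j)+φ(U'_j))/2 + (κ/8)‖U_j−U'_j‖²). Then almost surely sup_{φ∈Φ} |P̂_n^{(κ)}(φ) − P^{(κ)}(φ)| → 0 as n→∞. -/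

import Mathlib

open MeasureTheory ProbabilityTheory
open scoped ENNReal Classical

noncomputable section

abbrev E (d : ℕ) := EuclideanSpace ℝ (Fin d)

def cube (d : ℕ) : Set (E d) := {x | ∀ i, x i ∈ Set.Icc (0:ℝ) 1}

def lam (d : ℕ) : Measure (E d) := volume.restrict (cube d)

def KL {d : ℕ} (ν μ : Measure (E d)) : ℝ := ∫ x, Real.log ((ν.rnDeriv μ) x).toReal ∂ν

def JS {d : ℕ} (μ ν : Measure (E d)) : ℝ :=
  (1/2) * (KL ν ((2:ℝ≥0∞)⁻¹ • (μ + ν)) + KL μ ((2:ℝ≥0∞)⁻¹ • (μ + ν)))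

def ganLoss {d : ℕ} (μstar : Measure (E d)) (G : E d → E d) (D : E d → ℝ) : ℝ :=
  (1/2) * ((∫ y, Real.log (D y) ∂μstar) + ∫ z, Real.log (1 - D (G z)) ∂(lam d))

def hessW {d : ℕ} (φ : E d → ℝ) (x : E d) : E d →L[ℝ] E d →L[ℝ] ℝ :=
  fderivWithin ℝ (fun y => fderivWithin ℝ φ (cube d) y) (cube d) x

def gradW {d : ℕ} (φ : E d → ℝ) (x : E d) : E d :=
  (InnerProductSpace.toDual ℝ (E d)).symm (fderivWithin ℝ φ (cube d) x)

def hessMat {d : ℕ} (φ : E d → ℝ) (x : E d) : Matrix (Fin d) (Fin d) ℝ :=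
  fun i j => hessW φ x (EuclideanSpace.single i 1) (EuclideanSpace.single j 1)

def C2norm {d : ℕ} (φ : E d → ℝ) : ℝ :=
  ⨆ k : Fin 3, ⨆ x : cube d, ‖iteratedFDerivWithin ℝ (k : ℕ) φ (cube d) (x : E d)‖

def C21norm {d : ℕ} (φ : E d → ℝ) : ℝ :=
  C2norm φ + ⨆ p : cube d × cube d,
    ‖iteratedFDerivWithin ℝ 2 φ (cube d) (p.1 : E d) - iteratedFDerivWithin ℝ 2 φ (cube d) (p.2 : E d)‖
      / ‖(p.1 : E d) - (p.2 : E d)‖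

def Pen {d : ℕ} (κ : ℝ) (φ : E d → ℝ) : ℝ :=
  ∫ u, max 0 (φ ((2:ℝ)⁻¹ • (u.1 + u.2)) - (φ u.1 + φ u.2)/2 + (κ/8) * ‖u.1 - u.2‖^2)
    ∂((volume.restrict (cube d)).prod (volume.restrict (cube d)))
def empPen {Ω : Type*} {d : ℕ} (U U' : ℕ → Ω → E d) (κ : ℝ) (φ : E d → ℝ)
    (k : ℕ) (ω : Ω) : ℝ :=
  (1/(k:ℝ)) * ∑ j ∈ Finset.range k,
    max 0 (φ ((2:ℝ)⁻¹ • (U j ω + U' j ω)) - (φ (U j ω) + φ (U' j ω))/2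
      + (κ/8) * ‖U j ω - U' j ω‖^2)

variable {d : ℕ}

lemma cube_measurableSet : MeasurableSet (cube d) := by
  have : cube d = ⋂ i, (fun x : E d => x i) ⁻¹' Set.Icc (0:ℝ) 1 := by
    ext x; simp [cube]
  rw [this]
  exact MeasurableSet.iInter fun i =>
    ((continuous_apply i).comp (EuclideanSpace.equiv (Fin d) ℝ).continuous).measurable
      measurableSet_Icc

lemma cube_convex : Convex ℝ (cube d) := by
  intro x hx y hy a b ha hb hab i
  have hx' := hx i; have hy' := hy i
  simp only [PiLp.add_apply, PiLp.smul_apply, smul_eq_mul]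
  constructor
  · nlinarith [hx'.1, hy'.1]
  · nlinarith [hx'.2, hy'.2, hx'.1, hy'.1]

lemma zero_mem_cube : (0 : E d) ∈ cube d := by
  intro i; simp

lemma cube_isCompact : IsCompact (cube d) := by
  have h : cube d = (EuclideanSpace.equiv (Fin d) ℝ).toHomeomorph ⁻¹' (Set.univ.pi fun _ => Set.Icc (0:ℝ) 1) := by
    ext x
    constructor
    · intro hx
      intro i _
      exact hx i
    · intro hx i
      exact hx i (Set.mem_univ i)
  rw [h]
  exact (EuclideanSpace.equiv (Fin d) ℝ).toHomeomorph.isCompact_preimage.mpr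
    (isCompact_univ_pi fun _ => isCompact_Icc)

lemma cube_uniqueDiffOn : UniqueDiffOn ℝ (cube d) := by
  apply uniqueDiffOn_convex cube_convex
  refine ⟨(WithLp.toLp 2 (fun _ => (2:ℝ)⁻¹) : E d), ?_⟩
  have hopen : IsOpen {x : E d | ∀ i, x i ∈ Set.Ioo (0:ℝ) 1} := by
    have : {x : E d | ∀ i, x i ∈ Set.Ioo (0:ℝ) 1} = ⋂ i, (fun x : E d => x i) ⁻¹' Set.Ioo (0:ℝ) 1 := by
      ext x; simp
    rw [this]
    exact isOpen_iInter_of_finite fun i =>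
      (isOpen_Ioo).preimage ((continuous_apply i).comp (EuclideanSpace.equiv (Fin d) ℝ).continuous)
  have hsub : {x : E d | ∀ i, x i ∈ Set.Ioo (0:ℝ) 1} ⊆ cube d :=
    fun x hx i => ⟨(hx i).1.le, (hx i).2.le⟩
  have hmem : (WithLp.toLp 2 (fun _ => (2:ℝ)⁻¹) : E d) ∈ {x : E d | ∀ i, x i ∈ Set.Ioo (0:ℝ) 1} := by
    intro i; constructor <;> norm_num
  exact interior_maximal hsub hopen hmem

lemma volume_cube : (volume : Measure (E d)) (cube d) = 1 := by
  have h := EuclideanSpace.volume_preserving_symm_measurableEquiv_toLp (Fin d)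
  have h2 : cube d = (MeasurableEquiv.toLp 2 (Fin d → ℝ)).symm ⁻¹' (Set.univ.pi fun _ => Set.Icc (0:ℝ) 1) := by
    ext x
    constructor
    · intro hx i _; exact hx i
    · intro hx i; exact hx i (Set.mem_univ i)
  rw [h2, h.measure_preimage ((MeasurableSet.univ_pi fun _ => measurableSet_Icc).nullMeasurableSet)]
  rw [volume_pi_pi]
  simp [Real.volume_Icc]

instance lam_isProbability : IsProbabilityMeasure (lam d) := by
  constructor
  rw [lam, Measure.restrict_apply_univ, volume_cube]

lemma midpoint_mem_cube {x y : E d} (hx : x ∈ cube d) (hy : y ∈ cube d) :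
    (2:ℝ)⁻¹ • (x + y) ∈ cube d := by
  have := cube_convex hx hy (by norm_num : (0:ℝ) ≤ 2⁻¹) (by norm_num : (0:ℝ) ≤ 2⁻¹) (by norm_num)
  simpa [smul_add] using this

lemma normsq_le_of_mem_cube {x y : E d} (hx : x ∈ cube d) (hy : y ∈ cube d) :
    ‖x - y‖^2 ≤ (d : ℝ) := by
  have h : ‖x - y‖^2 = ∑ i, (x i - y i)^2 := by
    rw [EuclideanSpace.norm_eq, Real.sq_sqrt (by positivity)]
    congr 1
    ext i
    simp [Real.norm_eq_abs, sq_abs]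
  rw [h]
  calc ∑ i, (x i - y i)^2 ≤ ∑ _i : Fin d, (1:ℝ) := by
        apply Finset.sum_le_sum
        intro i _
        have h1 := hx i; have h2 := hy i
        nlinarith [h1.1, h1.2, h2.1, h2.2]
    _ = d := by simp

def gfun (d : ℕ) (κ : ℝ) (φ : E d → ℝ) (p : E d × E d) : ℝ :=
  max 0 (φ ((2:ℝ)⁻¹ • (p.1 + p.2)) - (φ p.1 + φ p.2)/2 + (κ/8) * ‖p.1 - p.2‖^2)

lemma Pen_eq (κ : ℝ) (φ : E d → ℝ) :
    Pen κ φ = ∫ p, gfun d κ φ p ∂((lam d).prod (lam d)) := rfl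

lemma empPen_eq {Ω : Type*} (U U' : ℕ → Ω → E d) (κ : ℝ) (φ : E d → ℝ) (k : ℕ) (ω : Ω) :
    empPen U U' κ φ k ω = (1/(k:ℝ)) * ∑ j ∈ Finset.range k, gfun d κ φ (U j ω, U' j ω) := rfl

lemma gfun_nonneg (κ : ℝ) (φ : E d → ℝ) (p : E d × E d) : 0 ≤ gfun d κ φ p := le_max_left _ _

lemma gfun_diff_le {κ ε : ℝ} {φ ψ : E d → ℝ} (hclose : ∀ x ∈ cube d, |φ x - ψ x| ≤ ε)
    {p : E d × E d} (hp : p ∈ cube d ×ˢ cube d) :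
    |gfun d κ φ p - gfun d κ ψ p| ≤ 2 * ε := by
  have h1 := hclose _ (midpoint_mem_cube hp.1 hp.2)
  have h2 := hclose _ hp.1
  have h3 := hclose _ hp.2
  have key : ∀ a b : ℝ, |a - b| ≤ 2*ε → |max 0 a - max 0 b| ≤ 2*ε := by
    intro a b hab
    calc |max 0 a - max 0 b| ≤ |a - b| := by
          rw [max_comm 0 a, max_comm 0 b]
          exact abs_max_sub_max_le_abs a b 0
      _ ≤ 2*ε := hab
  apply key
  have : (φ ((2:ℝ)⁻¹ • (p.1 + p.2)) - (φ p.1 + φ p.2)/2 + (κ/8) * ‖p.1 - p.2‖^2)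
      - (ψ ((2:ℝ)⁻¹ • (p.1 + p.2)) - (ψ p.1 + ψ p.2)/2 + (κ/8) * ‖p.1 - p.2‖^2)
      = (φ ((2:ℝ)⁻¹ • (p.1 + p.2)) - ψ ((2:ℝ)⁻¹ • (p.1 + p.2)))
        - ((φ p.1 - ψ p.1) + (φ p.2 - ψ p.2))/2 := by ring
  show |(φ ((2:ℝ)⁻¹ • (p.1 + p.2)) - (φ p.1 + φ p.2)/2 + (κ/8) * ‖p.1 - p.2‖^2)
      - (ψ ((2:ℝ)⁻¹ • (p.1 + p.2)) - (ψ p.1 + ψ p.2)/2 + (κ/8) * ‖p.1 - p.2‖^2)| ≤ 2*ε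
  rw [this]
  calc |(φ ((2:ℝ)⁻¹ • (p.1 + p.2)) - ψ ((2:ℝ)⁻¹ • (p.1 + p.2)))
        - ((φ p.1 - ψ p.1) + (φ p.2 - ψ p.2))/2|
      ≤ |φ ((2:ℝ)⁻¹ • (p.1 + p.2)) - ψ ((2:ℝ)⁻¹ • (p.1 + p.2))|
        + |((φ p.1 - ψ p.1) + (φ p.2 - ψ p.2))/2| := abs_sub _ _
    _ = |φ ((2:ℝ)⁻¹ • (p.1 + p.2)) - ψ ((2:ℝ)⁻¹ • (p.1 + p.2))|
        + |(φ p.1 - ψ p.1) + (φ p.2 - ψ p.2)|/2 := by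
        rw [abs_div]
        norm_num
    _ ≤ ε + (|φ p.1 - ψ p.1| + |φ p.2 - ψ p.2|)/2 := by
        gcongr
        exact abs_add_le _ _
    _ ≤ ε + (ε + ε)/2 := by gcongr
    _ = 2*ε := by ring

lemma gfun_continuousOn {κ : ℝ} {φ : E d → ℝ} (hφ : ContinuousOn φ (cube d)) :
    ContinuousOn (gfun d κ φ) (cube d ×ˢ cube d) := by
  unfold gfun
  have hF : ContinuousOn (fun p : E d × E d =>
      φ ((2:ℝ)⁻¹ • (p.1 + p.2)) - (φ p.1 + φ p.2)/2 + (κ/8) * ‖p.1 - p.2‖^2)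
      (cube d ×ˢ cube d) := by
    apply ContinuousOn.add
    · apply ContinuousOn.sub
      · apply hφ.comp
        · exact (continuous_const_smul _).comp (continuous_fst.add continuous_snd) |>.continuousOn
        · intro p hp
          exact midpoint_mem_cube hp.1 hp.2
      · have h1 : ContinuousOn (fun p : E d × E d => φ p.1) (cube d ×ˢ cube d) :=
          hφ.comp continuousOn_fst fun p hp => hp.1
        have h2 : ContinuousOn (fun p : E d × E d => φ p.2) (cube d ×ˢ cube d) :=
          hφ.comp continuousOn_snd fun p hp => hp.2
        exact (h1.add h2).div_const 2
    · exact continuousOn_const.mul ((continuous_fst.sub continuous_snd).norm.pow 2).continuousOn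
  exact (continuous_const.max continuous_id).comp_continuousOn hF

lemma prod_lam_eq : (lam d).prod (lam d)
    = ((volume : Measure (E d)).prod volume).restrict (cube d ×ˢ cube d) := by
  rw [lam, Measure.prod_restrict]

lemma ae_mem_cube_prod : ∀ᵐ p ∂((lam d).prod (lam d)), p ∈ cube d ×ˢ cube d := by
  rw [prod_lam_eq]
  exact ae_restrict_mem (cube_measurableSet.prod cube_measurableSet)

lemma gfun_integrable {κ : ℝ} {φ : E d → ℝ} (hφ : ContinuousOn φ (cube d)) :
    Integrable (gfun d κ φ) ((lam d).prod (lam d)) := by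
  obtain ⟨B, hB⟩ := (cube_isCompact.prod cube_isCompact).exists_bound_of_continuousOn
    (gfun_continuousOn hφ)
  have hmeas : AEStronglyMeasurable (gfun d κ φ) ((lam d).prod (lam d)) := by
    rw [prod_lam_eq]
    exact (gfun_continuousOn hφ).aestronglyMeasurable (cube_measurableSet.prod cube_measurableSet)
  refine Integrable.mono' (integrable_const B) hmeas ?_
  filter_upwards [ae_mem_cube_prod] with p hp
  exact hB p hp

lemma Pen_diff_le {κ ε : ℝ} (hε : 0 ≤ ε) {φ ψ : E d → ℝ}
    (hφ : ContinuousOn φ (cube d)) (hψ : ContinuousOn ψ (cube d))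
    (hclose : ∀ x ∈ cube d, |φ x - ψ x| ≤ ε) :
    |Pen κ φ - Pen κ ψ| ≤ 2 * ε := by
  rw [Pen_eq, Pen_eq, ← integral_sub (gfun_integrable hφ) (gfun_integrable hψ)]
  calc |∫ p, (gfun d κ φ p - gfun d κ ψ p) ∂((lam d).prod (lam d))|
      ≤ ∫ p, |gfun d κ φ p - gfun d κ ψ p| ∂((lam d).prod (lam d)) := by
        simpa [Real.norm_eq_abs] using
          norm_integral_le_integral_norm (μ := (lam d).prod (lam d))
            (fun p => gfun d κ φ p - gfun d κ ψ p)
    _ ≤ ∫ _p, 2*ε ∂((lam d).prod (lam d)) := by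
        apply integral_mono_ae ((gfun_integrable hφ).sub (gfun_integrable hψ)).abs
          (integrable_const _)
        filter_upwards [ae_mem_cube_prod] with p hp
        exact gfun_diff_le hclose hp
    _ = 2*ε := by simp

lemma empPen_diff_le {Ω : Type*} {U U' : ℕ → Ω → E d} {κ ε : ℝ} (hε : 0 ≤ ε)
    {φ ψ : E d → ℝ} {ω : Ω} (hcube : ∀ j, U j ω ∈ cube d ∧ U' j ω ∈ cube d)
    (hclose : ∀ x ∈ cube d, |φ x - ψ x| ≤ ε) (k : ℕ) :
    |empPen U U' κ φ k ω - empPen U U' κ ψ k ω| ≤ 2 * ε := by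
  rw [empPen_eq, empPen_eq, ← mul_sub, ← Finset.sum_sub_distrib, abs_mul]
  calc |1/(k:ℝ)| * |∑ j ∈ Finset.range k, (gfun d κ φ (U j ω, U' j ω) - gfun d κ ψ (U j ω, U' j ω))|
      ≤ |1/(k:ℝ)| * ∑ j ∈ Finset.range k, |gfun d κ φ (U j ω, U' j ω) - gfun d κ ψ (U j ω, U' j ω)| := by
        gcongr
        exact Finset.abs_sum_le_sum_abs _ _
    _ ≤ |1/(k:ℝ)| * ∑ _j ∈ Finset.range k, 2*ε := by
        apply mul_le_mul_of_nonneg_left _ (abs_nonneg _)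
        apply Finset.sum_le_sum
        intro j _
        exact gfun_diff_le hclose ⟨(hcube j).1, (hcube j).2⟩
    _ ≤ 2 * ε := by
        rcases Nat.eq_zero_or_pos k with hk | hk
        · simp [hk]
          positivity
        · rw [Finset.sum_const, Finset.card_range, abs_of_nonneg (by positivity : (0:ℝ) ≤ 1/(k:ℝ))]
          rw [nsmul_eq_mul]
          rw [one_div, ← mul_assoc, inv_mul_cancel₀ (by positivity : (k:ℝ) ≠ 0), one_mul]

instance cube_nonempty : Nonempty (cube d) := ⟨⟨0, zero_mem_cube⟩⟩

lemma C2norm_le {φ : E d → ℝ} {H : ℝ} (hn : C21norm φ ≤ H) : C2norm φ ≤ H := by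
  have hs2 : 0 ≤ ⨆ p : cube d × cube d,
      ‖iteratedFDerivWithin ℝ 2 φ (cube d) (p.1 : E d) - iteratedFDerivWithin ℝ 2 φ (cube d) (p.2 : E d)‖
        / ‖(p.1 : E d) - (p.2 : E d)‖ :=
    Real.iSup_nonneg fun p => div_nonneg (norm_nonneg _) (norm_nonneg _)
  unfold C21norm at hn
  linarith

lemma iFD_le_C2norm {φ : E d → ℝ} (hφ : ContDiffOn ℝ 2 φ (cube d)) (k : Fin 3)
    {x : E d} (hx : x ∈ cube d) :
    ‖iteratedFDerivWithin ℝ (k : ℕ) φ (cube d) x‖ ≤ C2norm φ := by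
  have hcont : ContinuousOn (fun y => iteratedFDerivWithin ℝ (k:ℕ) φ (cube d) y) (cube d) := by
    apply hφ.continuousOn_iteratedFDerivWithin _ cube_uniqueDiffOn
    have : (k:ℕ) < 3 := k.isLt
    exact_mod_cast Nat.lt_succ_iff.mp this
  obtain ⟨B, hB⟩ : ∃ B, ∀ y ∈ cube d, ‖iteratedFDerivWithin ℝ (k:ℕ) φ (cube d) y‖ ≤ B :=
    cube_isCompact.exists_bound_of_continuousOn hcont
  have hbdd : BddAbove (Set.range fun x : cube d =>
      ‖iteratedFDerivWithin ℝ (k:ℕ) φ (cube d) (x : E d)‖) := by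
    refine ⟨B, ?_⟩
    rintro _ ⟨y, rfl⟩
    exact hB y y.2
  unfold C2norm
  refine le_trans (le_ciSup hbdd ⟨x, hx⟩) ?_
  exact le_ciSup (f := fun k : Fin 3 => ⨆ x : cube d,
    ‖iteratedFDerivWithin ℝ (k:ℕ) φ (cube d) (x:E d)‖) (Set.finite_range _).bddAbove k

lemma C2norm_nonneg {φ : E d → ℝ} (hφ : ContDiffOn ℝ 2 φ (cube d)) : 0 ≤ C2norm φ :=
  (norm_nonneg _).trans (iFD_le_C2norm hφ 0 zero_mem_cube)

lemma abs_le_of_C2 {φ : E d → ℝ} (hφ : ContDiffOn ℝ 2 φ (cube d)) {x : E d} (hx : x ∈ cube d) :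
    |φ x| ≤ C2norm φ := by
  have h0 := iFD_le_C2norm hφ 0 hx
  have he : ((0 : Fin 3) : ℕ) = 0 := rfl
  rw [he, norm_iteratedFDerivWithin_zero, Real.norm_eq_abs] at h0
  exact h0

lemma lipschitz_of_C2 {φ : E d → ℝ} (hφ : ContDiffOn ℝ 2 φ (cube d)) {H : ℝ} (hH : 0 ≤ H)
    (hn : C2norm φ ≤ H) : LipschitzOnWith H.toNNReal φ (cube d) := by
  apply Convex.lipschitzOnWith_of_nnnorm_fderivWithin_le (hφ.differentiableOn (by norm_num)) _ cube_convex
  intro x hx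
  have hfd : ‖fderivWithin ℝ φ (cube d) x‖ ≤ C2norm φ := by
    apply ContinuousLinearMap.opNorm_le_bound _ (C2norm_nonneg hφ)
    intro v
    have h1 : iteratedFDerivWithin ℝ 1 φ (cube d) x (fun _ => v)
        = fderivWithin ℝ φ (cube d) x v :=
      iteratedFDerivWithin_one_apply (cube_uniqueDiffOn x hx) _
    calc ‖fderivWithin ℝ φ (cube d) x v‖
        = ‖iteratedFDerivWithin ℝ 1 φ (cube d) x (fun _ => v)‖ := by rw [h1]
      _ ≤ ‖iteratedFDerivWithin ℝ 1 φ (cube d) x‖ * ∏ _i : Fin 1, ‖v‖ :=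
          ContinuousMultilinearMap.le_opNorm _ _
      _ = ‖iteratedFDerivWithin ℝ 1 φ (cube d) x‖ * ‖v‖ := by simp
      _ ≤ C2norm φ * ‖v‖ := by
          gcongr
          exact iFD_le_C2norm hφ 1 hx
  rw [← NNReal.coe_le_coe]
  simp only [coe_nnnorm, Real.coe_toNNReal _ hH]
  exact hfd.trans hn

lemma zero_mem_Phi {H : ℝ} (hH : 0 ≤ H) :
    ContDiffOn ℝ 2 (fun _ : E d => (0:ℝ)) (cube d) ∧ C21norm (fun _ : E d => (0:ℝ)) ≤ H ∧
    LipschitzOnWith (Real.toNNReal H)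
      (fun x => iteratedFDerivWithin ℝ 2 (fun _ : E d => (0:ℝ)) (cube d) x) (cube d) := by
  have hz : ∀ (i : ℕ) (x : E d), x ∈ cube d →
      iteratedFDerivWithin ℝ i (fun _ : E d => (0:ℝ)) (cube d) x = 0 := fun i x hx =>
    congrFun iteratedFDerivWithin_zero_fun x
  refine ⟨contDiffOn_const, ?_, ?_⟩
  · have h1 : C2norm (fun _ : E d => (0:ℝ)) = 0 := by
      unfold C2norm
      have : ∀ k : Fin 3, (⨆ x : cube d,
          ‖iteratedFDerivWithin ℝ (k:ℕ) (fun _ : E d => (0:ℝ)) (cube d) (x : E d)‖) = 0 := by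
        intro k
        have he : (fun x : cube d =>
            ‖iteratedFDerivWithin ℝ (k:ℕ) (fun _ : E d => (0:ℝ)) (cube d) (x : E d)‖)
            = fun _ => (0:ℝ) := by
          funext x
          rw [hz _ _ x.2]
          simp
        rw [he]
        exact ciSup_const
      simp only [this]
      exact ciSup_const
    have h2 : (⨆ p : cube d × cube d,
        ‖iteratedFDerivWithin ℝ 2 (fun _ : E d => (0:ℝ)) (cube d) (p.1 : E d)
          - iteratedFDerivWithin ℝ 2 (fun _ : E d => (0:ℝ)) (cube d) (p.2 : E d)‖
          / ‖(p.1 : E d) - (p.2 : E d)‖) = 0 := by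
      have he : (fun p : cube d × cube d =>
          ‖iteratedFDerivWithin ℝ 2 (fun _ : E d => (0:ℝ)) (cube d) (p.1 : E d)
            - iteratedFDerivWithin ℝ 2 (fun _ : E d => (0:ℝ)) (cube d) (p.2 : E d)‖
            / ‖(p.1 : E d) - (p.2 : E d)‖) = fun _ => (0:ℝ) := by
        funext p
        rw [hz _ _ p.1.2, hz _ _ p.2.2]
        simp
      rw [he]
      exact ciSup_const
    unfold C21norm
    rw [h1, h2]
    simpa using hH
  · intro x hx y hy
    simp only []
    rw [hz 2 x hx, hz 2 y hy]
    simp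

instance cube_compactSpace : CompactSpace (cube d) := isCompact_iff_compactSpace.mp cube_isCompact

/-- extension of a function on the cube to the whole space -/
def extCube (f : cube d → ℝ) : E d → ℝ := fun x => if h : x ∈ cube d then f ⟨x, h⟩ else 0

lemma extCube_measurable {f : cube d → ℝ} (hf : Continuous f) : Measurable (extCube f) :=
  Measurable.dite (hf.measurable) measurable_const cube_measurableSet

lemma extCube_continuousOn {f : cube d → ℝ} (hf : Continuous f) :
    ContinuousOn (extCube f) (cube d) := by
  rw [continuousOn_iff_continuous_restrict]
  have : (cube d).restrict (extCube f) = f := by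
    funext x
    simp [extCube, Set.restrict, x.2]
  rw [show (cube d).domRestrict (extCube f) = f from this]
  exact hf

lemma extCube_eq {f : cube d → ℝ} {x : E d} (hx : x ∈ cube d) : extCube f x = f ⟨x, hx⟩ :=
  dif_pos hx

lemma exists_net (H : ℝ) (hH : 0 ≤ H) {ε : ℝ} (hε : 0 < ε) :
    ∃ F : Finset (E d → ℝ),
      (∀ ψ ∈ F, Measurable ψ ∧ ContinuousOn ψ (cube d) ∧ ∃ B, ∀ x ∈ cube d, |ψ x| ≤ B) ∧
      ∀ φ : E d → ℝ, ContinuousOn φ (cube d) → (∀ x ∈ cube d, |φ x| ≤ H) →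
        LipschitzOnWith H.toNNReal φ (cube d) →
        ∃ ψ ∈ F, ∀ x ∈ cube d, |φ x - ψ x| ≤ ε := by
  classical
  set A : Set (BoundedContinuousFunction (cube d) ℝ) :=
    {f | LipschitzWith H.toNNReal f ∧ ∀ x, f x ∈ Set.Icc (-H) H} with hA
  have hcompact : IsCompact (closure A) := by
    apply BoundedContinuousFunction.arzela_ascoli (Set.Icc (-H) H) isCompact_Icc A
    · intro f x hf
      exact hf.2 x
    · apply Metric.equicontinuous_of_continuity_modulus (fun t => (H.toNNReal : ℝ) * t)
      · have : Filter.Tendsto (fun t : ℝ => (H.toNNReal : ℝ) * t) (nhds 0) (nhds ((H.toNNReal : ℝ) * 0)) :=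
          Filter.Tendsto.const_mul _ Filter.tendsto_id
        simpa using this
      · intro x y ⟨f, hf⟩
        exact hf.1.dist_le_mul x y
  have htb : TotallyBounded A := hcompact.totallyBounded.subset subset_closure
  obtain ⟨t, htA, htfin, hcover⟩ := htb.exists_subset (Metric.dist_mem_uniformity hε)
  refine ⟨(htfin.toFinset).image (fun f : BoundedContinuousFunction (cube d) ℝ => extCube ⇑f), ?_, ?_⟩
  · intro ψ hψ
    simp only [Finset.mem_image, Set.Finite.mem_toFinset] at hψ
    obtain ⟨f, hf, rfl⟩ := hψ
    refine ⟨extCube_measurable f.continuous, extCube_continuousOn f.continuous, ‖f‖, ?_⟩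
    intro x hx
    rw [extCube_eq hx]
    have := f.norm_coe_le_norm ⟨x, hx⟩
    rwa [Real.norm_eq_abs] at this
  · intro φ hcont hbound hlip
    set fφ : BoundedContinuousFunction (cube d) ℝ := BoundedContinuousFunction.mkOfCompact
      ⟨(cube d).restrict φ, continuousOn_iff_continuous_restrict.mp hcont⟩ with hfφ
    have hfA : fφ ∈ A := by
      constructor
      · exact lipschitzOnWith_iff_restrict.mp hlip
      · intro x
        have := hbound x x.2
        exact Set.mem_Icc.mpr (abs_le.mp this)
    obtain ⟨c, hct, hc⟩ := Set.mem_iUnion₂.mp (hcover hfA)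
    refine ⟨extCube ⇑c, ?_, ?_⟩
    · simp only [Finset.mem_image, Set.Finite.mem_toFinset]
      exact ⟨c, hct, rfl⟩
    · intro x hx
      rw [extCube_eq hx]
      have h1 : dist (fφ ⟨x, hx⟩) (c ⟨x, hx⟩) ≤ dist fφ c :=
        BoundedContinuousFunction.dist_coe_le_dist _
      have h2 : dist fφ c < ε := hc
      have h3 : fφ ⟨x, hx⟩ = φ x := rfl
      rw [h3, Real.dist_eq] at h1
      linarith

lemma gfun_measurable {κ : ℝ} {ψ : E d → ℝ} (hψ : Measurable ψ) : Measurable (gfun d κ ψ) := by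
  unfold gfun
  apply Measurable.max measurable_const
  apply Measurable.add
  · apply Measurable.sub
    · exact hψ.comp ((continuous_const_smul _).comp (continuous_fst.add continuous_snd)).measurable
    · exact ((hψ.comp measurable_fst).add (hψ.comp measurable_snd)).div_const 2
  · exact measurable_const.mul ((continuous_fst.sub continuous_snd).norm.pow 2).measurable

lemma gfun_le {κ B : ℝ} {ψ : E d → ℝ} (hψb : ∀ x ∈ cube d, |ψ x| ≤ B) {p : E d × E d}
    (hp : p ∈ cube d ×ˢ cube d) : gfun d κ ψ p ≤ 2*B + |κ|/8 * d := by
  have hB : 0 ≤ B := (abs_nonneg _).trans (hψb 0 zero_mem_cube)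
  have h1 := abs_le.mp (hψb _ (midpoint_mem_cube hp.1 hp.2))
  have h2 := abs_le.mp (hψb _ hp.1)
  have h3 := abs_le.mp (hψb _ hp.2)
  have hn := normsq_le_of_mem_cube hp.1 hp.2
  have hnn : (0:ℝ) ≤ ‖p.1-p.2‖^2 := by positivity
  have hd : (0:ℝ) ≤ d := Nat.cast_nonneg d
  apply max_le (by positivity)
  have hκ : κ/8 * ‖p.1-p.2‖^2 ≤ |κ|/8 * d := by
    have habs : κ/8 ≤ |κ|/8 := by
      have := le_abs_self κ
      linarith
    calc κ/8 * ‖p.1-p.2‖^2 ≤ |κ|/8 * ‖p.1-p.2‖^2 :=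
          mul_le_mul_of_nonneg_right habs hnn
      _ ≤ |κ|/8 * d := by
          apply mul_le_mul_of_nonneg_left hn (by positivity)
  linarith [h1.2, h2.1, h3.1]

lemma ae_mem_cube {Ω : Type*} [MeasurableSpace Ω] {P : Measure Ω} [IsProbabilityMeasure P]
    {V : Ω → E d} (hm : Measurable V) (hl : P.map V = lam d) :
    ∀ᵐ ω ∂P, V ω ∈ cube d := by
  have h1 : P (V ⁻¹' cube d) = 1 := by
    rw [← Measure.map_apply hm cube_measurableSet, hl, lam, Measure.restrict_apply_self, volume_cube]
  rw [ae_iff]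
  have h2 : {ω | ¬ V ω ∈ cube d} = (V ⁻¹' cube d)ᶜ := rfl
  rw [h2, measure_compl (hm cube_measurableSet) (measure_ne_top _ _), h1]
  simp

lemma empPen_slln {Ω : Type*} [MeasurableSpace Ω] (P : Measure Ω) [IsProbabilityMeasure P]
    (U U' : ℕ → Ω → E d) (hU_meas : ∀ j, Measurable (U j)) (hU'_meas : ∀ j, Measurable (U' j))
    (hU_law : ∀ j, P.map (U j) = lam d) (hU'_law : ∀ j, P.map (U' j) = lam d)
    (hindep : iIndepFun (Sum.elim U U') P)
    (κ : ℝ) (ψ : E d → ℝ) (hψm : Measurable ψ) (hψc : ContinuousOn ψ (cube d))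
    (B : ℝ) (hψb : ∀ x ∈ cube d, |ψ x| ≤ B) :
    ∀ᵐ ω ∂P, Filter.Tendsto (fun k => empPen U U' κ ψ k ω) Filter.atTop (nhds (Pen κ ψ)) := by
  classical
  set X : ℕ → Ω → ℝ := fun j ω => gfun d κ ψ (U j ω, U' j ω) with hX
  have hXm : ∀ j, Measurable (X j) := fun j =>
    (gfun_measurable hψm).comp ((hU_meas j).prodMk (hU'_meas j))
  have hSum_meas : ∀ s : ℕ ⊕ ℕ, Measurable (Sum.elim U U' s) := by
    intro s
    cases s with
    | inl i => exact hU_meas i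
    | inr i => exact hU'_meas i
  have pairindep : ∀ i j, i ≠ j →
      IndepFun (fun ω => (U i ω, U' i ω)) (fun ω => (U j ω, U' j ω)) P := by
    intro i j hij
    exact hindep.indepFun_prodMk_prodMk hSum_meas (.inl i) (.inr i) (.inl j) (.inr j)
      (by simp [hij]) (by simp) (by simp) (by simp [hij])
  have hpairlaw : ∀ j, P.map (fun ω => (U j ω, U' j ω)) = (lam d).prod (lam d) := by
    intro j
    have h := hindep.indepFun (show (Sum.inl j : ℕ ⊕ ℕ) ≠ Sum.inr j by simp)
    have h2 := (indepFun_iff_map_prod_eq_prod_map_map (μ := P)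
      (hU_meas j).aemeasurable (hU'_meas j).aemeasurable).mp h
    rw [h2, hU_law j, hU'_law j]
  have hX_indep : Pairwise (Function.onFun (IndepFun · · P) X) := fun i j hij =>
    (pairindep i j hij).comp (gfun_measurable hψm) (gfun_measurable hψm)
  have hX_ident : ∀ j, IdentDistrib (X j) (X 0) P P := by
    intro j
    have hpair : IdentDistrib (fun ω => (U j ω, U' j ω)) (fun ω => (U 0 ω, U' 0 ω)) P P :=
      ⟨((hU_meas j).prodMk (hU'_meas j)).aemeasurable,
       ((hU_meas 0).prodMk (hU'_meas 0)).aemeasurable, by rw [hpairlaw j, hpairlaw 0]⟩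
    exact hpair.comp (gfun_measurable hψm)
  have hX_int : Integrable (X 0) P := by
    apply Integrable.mono' (integrable_const (2*B + |κ|/8 * d)) (hXm 0).aestronglyMeasurable
    filter_upwards [ae_mem_cube (hU_meas 0) (hU_law 0), ae_mem_cube (hU'_meas 0) (hU'_law 0)]
      with ω h1 h2
    rw [Real.norm_eq_abs, abs_of_nonneg (gfun_nonneg _ _ _)]
    exact gfun_le hψb ⟨h1, h2⟩
  have hint : ∫ ω, X 0 ω ∂P = Pen κ ψ := by
    rw [Pen_eq, ← hpairlaw 0, integral_map ((hU_meas 0).prodMk (hU'_meas 0)).aemeasurable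
      (gfun_measurable hψm).aestronglyMeasurable]
  have hslln := strong_law_ae X hX_int hX_indep hX_ident
  filter_upwards [hslln] with ω hω
  have : (fun k => empPen U U' κ ψ k ω)
      = fun k : ℕ => (k:ℝ)⁻¹ • ∑ j ∈ Finset.range k, X j ω := by
    funext k
    rw [empPen_eq, smul_eq_mul, one_div]
  rw [this, ← hint]
  exact hω


/-- uniform law of large numbers for the empirical convexity penalty over a
`C^{2,1}`-ball: `sup_{φ∈Φ} |P̂_n^{(κ)}(φ) − P^{(κ)}(φ)| → 0` almost surely. -/
theorem stmt14 {d : ℕ} {Ω : Type*} [MeasurableSpace Ω]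
    (P : Measure Ω) [IsProbabilityMeasure P]
    (Htilde κ : ℝ) (hH : 0 < Htilde) (hκ : 0 < κ)
    (Φ : Set (E d → ℝ))
    (hΦ : Φ = {φ | ContDiffOn ℝ 2 φ (cube d) ∧ C21norm φ ≤ Htilde ∧
      LipschitzOnWith (Real.toNNReal Htilde)
        (fun x => iteratedFDerivWithin ℝ 2 φ (cube d) x) (cube d)})
    (U U' : ℕ → Ω → E d)
    (hU_meas : ∀ j, Measurable (U j)) (hU'_meas : ∀ j, Measurable (U' j))
    (hU_law : ∀ j, P.map (U j) = lam d) (hU'_law : ∀ j, P.map (U' j) = lam d)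
    (hindep : iIndepFun (Sum.elim U U') P)
    (m : ℕ → ℕ) (hm : StrictMono m)
    (hm_top : Filter.Tendsto m Filter.atTop Filter.atTop) :
    ∀ᵐ ω ∂P, Filter.Tendsto
      (fun n => ⨆ φ : Φ, |empPen U U' κ (φ : E d → ℝ) (m n) ω - Pen κ (φ : E d → ℝ)|)
      Filter.atTop (nhds 0) := by

  classical
  have hmem0 : (fun _ : E d => (0:ℝ)) ∈ Φ := by
    rw [hΦ]; exact zero_mem_Phi hH.le
  haveI : Nonempty Φ := ⟨⟨_, hmem0⟩⟩
  have hprops : ∀ φ : E d → ℝ, φ ∈ Φ → ContinuousOn φ (cube d) ∧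
      (∀ x ∈ cube d, |φ x| ≤ Htilde) ∧ LipschitzOnWith Htilde.toNNReal φ (cube d) := by
    intro φ hφ
    rw [hΦ] at hφ
    obtain ⟨hc, hn, _⟩ := hφ
    have h2 := C2norm_le hn
    exact ⟨hc.continuousOn, fun x hx => (abs_le_of_C2 hc hx).trans h2,
      lipschitz_of_C2 hc hH.le h2⟩
  have hnet : ∀ k : ℕ, ∃ F : Finset (E d → ℝ),
      (∀ ψ ∈ F, Measurable ψ ∧ ContinuousOn ψ (cube d) ∧ ∃ B, ∀ x ∈ cube d, |ψ x| ≤ B) ∧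
      ∀ φ : E d → ℝ, ContinuousOn φ (cube d) → (∀ x ∈ cube d, |φ x| ≤ Htilde) →
        LipschitzOnWith Htilde.toNNReal φ (cube d) →
        ∃ ψ ∈ F, ∀ x ∈ cube d, |φ x - ψ x| ≤ 1/((k:ℝ)+1) := by
    intro k
    exact exists_net Htilde hH.le (by positivity)
  choose F hF1 hF2 using hnet
  have hsl : ∀ᵐ ω ∂P, ∀ k : ℕ, ∀ ψ ∈ F k,
      Filter.Tendsto (fun j => empPen U U' κ ψ j ω) Filter.atTop (nhds (Pen κ ψ)) := by
    rw [ae_all_iff]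
    intro k
    rw [Filter.eventually_all_finset]
    intro ψ hψ
    obtain ⟨hm', hc, B, hB⟩ := hF1 k ψ hψ
    exact empPen_slln P U U' hU_meas hU'_meas hU_law hU'_law hindep κ ψ hm' hc B hB
  have hcube_ae : ∀ᵐ ω ∂P, ∀ j, U j ω ∈ cube d ∧ U' j ω ∈ cube d := by
    rw [ae_all_iff]
    intro j
    filter_upwards [ae_mem_cube (hU_meas j) (hU_law j), ae_mem_cube (hU'_meas j) (hU'_law j)]
      with ω h1 h2
    exact ⟨h1, h2⟩
  filter_upwards [hsl, hcube_ae] with ω hω hcube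
  rw [Metric.tendsto_atTop]
  intro ε hε
  obtain ⟨k, hk⟩ := exists_nat_one_div_lt (show (0:ℝ) < ε/6 by linarith)
  have hδpos : (0:ℝ) < 1/((k:ℝ)+1) := by positivity
  set δ : ℝ := 1/((k:ℝ)+1) with hδdef
  have hδε : 5*δ < ε := by
    have : δ < ε/6 := hk
    linarith
  have hev : ∀ᶠ n in Filter.atTop, ∀ ψ ∈ F k,
      |empPen U U' κ ψ (m n) ω - Pen κ ψ| < δ := by
    rw [Filter.eventually_all_finset]
    intro ψ hψ
    have ht := (hω k ψ hψ).comp hm_top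
    rw [Metric.tendsto_atTop] at ht
    obtain ⟨N, hN⟩ := ht δ hδpos
    rw [Filter.eventually_atTop]
    refine ⟨N, fun n hn => ?_⟩
    have := hN n hn
    rwa [Real.dist_eq] at this
  rw [Filter.eventually_atTop] at hev
  obtain ⟨N, hN⟩ := hev
  refine ⟨N, fun n hn => ?_⟩
  have hSle : (⨆ φ : Φ, |empPen U U' κ (φ : E d → ℝ) (m n) ω - Pen κ (φ : E d → ℝ)|) ≤ 5*δ := by
    apply ciSup_le
    rintro ⟨φ, hφΦ⟩
    obtain ⟨hc, hb, hl⟩ := hprops φ hφΦ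
    obtain ⟨ψ, hψF, hclose⟩ := hF2 k φ hc hb hl
    obtain ⟨hψm, hψc, Bψ, hψb⟩ := hF1 k ψ hψF
    have e1 : |empPen U U' κ φ (m n) ω - empPen U U' κ ψ (m n) ω| ≤ 2*δ :=
      empPen_diff_le hδpos.le hcube hclose (m n)
    have e2 : |Pen κ ψ - Pen κ φ| ≤ 2*δ := by
      rw [abs_sub_comm]
      exact Pen_diff_le hδpos.le hc hψc hclose
    have e3 : |empPen U U' κ ψ (m n) ω - Pen κ ψ| < δ := hN n hn ψ hψF
    have t1 := abs_sub_le (empPen U U' κ φ (m n) ω) (empPen U U' κ ψ (m n) ω) (Pen κ φ)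
    have t2 := abs_sub_le (empPen U U' κ ψ (m n) ω) (Pen κ ψ) (Pen κ φ)
    simp only []
    linarith
  have hSnn : (0:ℝ) ≤ ⨆ φ : Φ, |empPen U U' κ (φ : E d → ℝ) (m n) ω - Pen κ (φ : E d → ℝ)| :=
    Real.iSup_nonneg fun φ => abs_nonneg _
  rw [Real.dist_eq, sub_zero, abs_of_nonneg hSnn]
  linarith


end
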